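/- If v is a factor of w with |v| > 3, then there exists a factor u of w with |u| ≤ (|v|+4)/3 such that v is a factor of f(u). -/

import Mathlib

/-- The four-letter alphabet `A₄ = {1,2,3,4}`; the value `k : Fin 4` represents letter `k+1`. -/
abbrev A4 := Fin 4

/-- The morphism `f` on letters: `f(1)=121, f(2)=123, f(3)=141, f(4)=142`
(letters `1,2,3,4` encoded as `0,1,2,3`). -/
def fm : A4 → List A4
  | 0 => [0, 1, 0]
  | 1 => [0, 1, 2]
  | 2 => [0, 3, 0]
  | 3 => [0, 3, 1]

/-- The morphism `f` extended to words by concatenation. -/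
def fw (u : List A4) : List A4 := u.flatMap fm

/-- The fixed point `w` of `f` starting with the letter `1`: since `|f^k(1)| = 3^k` and each
`f^k(1)` is a prefix of `f^(k+1)(1)`, the `n`-th letter of `w` is the `n`-th letter of
`f^(n+1)(1)`. -/
def w (n : ℕ) : A4 := ((fw^[n + 1]) [0]).getD n 0

/-- The finite word `t` occurs at position `i` in the infinite word `x`. -/
def OccursAt {α : Type*} (t : List α) (x : ℕ → α) (i : ℕ) : Prop :=
  t = (List.range t.length).map fun k => x (i + k)

/-- The finite word `v` is a factor of the infinite word `x`. -/
def FactorOf {α : Type*} (v : List α) (x : ℕ → α) : Prop :=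
  ∃ i, OccursAt v x i

/-- The finite word `v` has period `q ≥ 1`: `v(j) = v(j+q)` whenever `0 ≤ j < |v| - q`. -/
def HasPeriod {α : Type*} (v : List α) (q : ℕ) : Prop :=
  1 ≤ q ∧ ∀ j, j + q < v.length → v[j]? = v[j + q]?

/-- A word lies in `ker ψ` if each letter of `A₄` occurs in it a number of times
divisible by `4`. -/
def InKerPsi (u : List A4) : Prop := ∀ a : A4, 4 ∣ u.count a

/-- `q` is a kernel period of `v`: `1 ≤ q ≤ |v|`, `v` has period `q`, and the prefix of `v`
of length `q` lies in `ker ψ`. -/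
def KernelPeriod (v : List A4) (q : ℕ) : Prop :=
  q ≤ v.length ∧ HasPeriod v q ∧ InKerPsi (v.take q)

lemma fm_length (a : A4) : (fm a).length = 3 := by fin_cases a <;> rfl

lemma fw_length (u : List A4) : (fw u).length = 3 * u.length := by
  induction u with
  | nil => rfl
  | cons a u ih =>
    simp [fw, List.flatMap_cons, fm_length] at *
    omega

lemma fw_append (u v : List A4) : fw (u ++ v) = fw u ++ fw v := by
  simp [fw]

lemma fw_getElem (u : List A4) (k r : ℕ) (hk : k < u.length) (hr : r < 3) :
    (fw u)[3*k + r]'(by rw [fw_length]; omega) =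
    (fm (u[k]'hk))[r]'(by rw [fm_length]; exact hr) := by
  induction u generalizing k with
  | nil => simp at hk
  | cons a u ih =>
    cases k with
    | zero =>
      have : fw (a :: u) = fm a ++ fw u := by simp [fw]
      simp only [this]
      rw [List.getElem_append_left (by rw [fm_length]; omega)]
      simp
    | succ k =>
      have h1 : fw (a :: u) = fm a ++ fw u := by simp [fw]
      have hk' : k < u.length := by simpa using hk
      have := ih k hk'
      simp only [h1]
      rw [List.getElem_append_right (by rw [fm_length]; omega)]
      have harith : 3*(k+1) + r - (fm a).length = 3*k + r := by rw [fm_length]; omega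
      simp only [harith]
      rw [this]
      simp

def P (k : ℕ) : List A4 := (fw^[k]) [0]

lemma P_succ (k : ℕ) : P (k+1) = fw (P k) := Function.iterate_succ_apply' fw k [0]

lemma P_length (k : ℕ) : (P k).length = 3^k := by
  induction k with
  | zero => rfl
  | succ k ih => rw [P_succ, fw_length, ih]; ring

lemma fw_prefix {u v : List A4} (h : u <+: v) : fw u <+: fw v := by
  obtain ⟨t, rfl⟩ := h
  exact ⟨fw t, (fw_append u t).symm⟩

lemma P_prefix_succ (k : ℕ) : P k <+: P (k+1) := by
  induction k with
  | zero => rw [P_succ]; exact ⟨[1,0], rfl⟩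
  | succ k ih =>
    have h2 := fw_prefix ih
    rw [← P_succ k, ← P_succ (k+1)] at h2
    exact h2

lemma P_prefix {k m : ℕ} (h : k ≤ m) : P k <+: P m := by
  induction m with
  | zero => simp_all
  | succ m ih =>
    rcases Nat.lt_or_ge k (m+1) with h' | h'
    · exact (ih (by omega)).trans (P_prefix_succ m)
    · have : k = m+1 := by omega
      subst this; rfl

lemma P_getElem_agree {k m n : ℕ} (h : k ≤ m) (hn : n < 3^k) :
    (P k)[n]'(by rw [P_length]; exact hn) =
    (P m)[n]'(by rw [P_length]; exact lt_of_lt_of_le hn (Nat.pow_le_pow_right (by norm_num) h)) :=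
  (P_prefix h).getElem _

lemma w_eq (m n : ℕ) (h : n < 3^m) : w n = (P m)[n]'(by rw [P_length]; exact h) := by
  have hn1 : n < 3^(n+1) := lt_of_lt_of_le (Nat.lt_pow_self (n := n) (a := 3) (by norm_num)) (Nat.pow_le_pow_right (by norm_num) (by omega))
  have hw : w n = (P (n+1))[n]'(by rw [P_length]; exact hn1) := by
    unfold w
    rw [List.getD_eq_getElem _ _ (by rw [show (fw^[n+1]) [0] = P (n+1) from rfl, P_length]; exact hn1)]
    rfl
  rw [hw]
  rcases Nat.le_total (n+1) m with h' | h'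
  · exact P_getElem_agree h' hn1
  · exact (P_getElem_agree h' h).symm

lemma wblock (k r : ℕ) (hr : r < 3) :
    w (3*k + r) = (fm (w k))[r]'(by rw [fm_length]; exact hr) := by
  have hk : k < 3^k := Nat.lt_pow_self (n := k) (a := 3) (by norm_num)
  have hkr : 3*k + r < 3^(k+1) := by
    have : 3^(k+1) = 3 * 3^k := by ring
    omega
  rw [w_eq (k+1) (3*k+r) hkr, w_eq k k hk]
  have := fw_getElem (P k) k r (by rw [P_length]; exact hk) hr
  simp only [← P_succ] at this
  exact this

lemma fw_getElem' (u : List A4) (j : ℕ) (hj : j < 3 * u.length) :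
    (fw u)[j]'(by rw [fw_length]; exact hj) =
    (fm (u[j/3]'(by omega)))[j % 3]'(by rw [fm_length]; omega) := by
  obtain ⟨k, r, hr, rfl⟩ : ∃ k r, r < 3 ∧ j = 3*k + r :=
    ⟨j/3, j%3, Nat.mod_lt _ (by norm_num), by omega⟩
  have hdiv : (3*k+r)/3 = k := by omega
  have hmod : (3*k+r)%3 = r := by omega
  simp only [hdiv, hmod]
  exact fw_getElem u k r (by omega) hr

lemma w_segment (s n : ℕ) :
    fw ((List.range n).map fun k => w (s+k)) =
    (List.range (3*n)).map fun j => w (3*s+j) := by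
  apply List.ext_getElem
  · simp [fw_length]
  · intro j h1 h2
    have hj : j < 3*n := by simpa using h2
    have hlen : j < 3 * ((List.range n).map fun k => w (s+k)).length := by simpa using hj
    rw [fw_getElem' _ j hlen]
    simp only [List.getElem_map, List.getElem_range]
    have := wblock (s + j/3) (j % 3) (by omega)
    rw [← this]
    congr 1
    omega


/-- If `v` is a factor of `w` with `|v| > 3`, then `v` is a factor of `f(u)` for some factor
`u` of `w` with `|u| ≤ (|v|+4)/3` (i.e. `3|u| ≤ |v|+4`). -/
theorem stmt15 (v : List A4) (hfac : FactorOf v w) (hlen : 3 < v.length) :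
    ∃ u : List A4, FactorOf u w ∧ 3 * u.length ≤ v.length + 4 ∧ v <:+: fw u := by
  obtain ⟨i, hocc⟩ := hfac
  set n := v.length with hn
  set a := i / 3 with ha
  set b := (i + n + 2) / 3 with hb
  have hia : 3*a ≤ i ∧ i ≤ 3*a + 2 := by
    constructor <;> omega
  have hib : i + n ≤ 3*b ∧ 3*b ≤ i + n + 2 := by
    constructor <;> omega
  refine ⟨(List.range (b - a)).map fun k => w (a+k), ⟨a, ?_⟩, ?_, ?_⟩
  · simp [OccursAt]
  · simp only [List.length_map, List.length_range]
    omega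
  · rw [w_segment]
    set L := (List.range (3*(b-a))).map fun j => w (3*a+j) with hL
    have hLlen : L.length = 3*(b-a) := by simp [hL]
    set d := i - 3*a with hd
    have hdn : d + n ≤ 3*(b-a) := by omega
    have hv : v = (L.drop d).take n := by
      apply List.ext_getElem
      · simp [hLlen]; omega
      · intro j hj1 hj2
        have hjn : j < n := hj1
        have hjv : j < v.length := hj1
        have hvj : v[j]'hjv = w (i + j) := by
          rw [List.getElem_of_eq hocc hjv]
          simp
        rw [List.getElem_take, List.getElem_drop]
        simp only [hL, List.getElem_map, List.getElem_range]
        exact hvj.trans (congrArg w (by omega))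
    rw [hv]
    exact ((L.drop d).take_prefix n).isInfix.trans (L.drop_suffix d).isInfix
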